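/- Let $F$ be a field, let $n \ge 3$, let $1 \le i \le n-2$, and let $z_1,\dots,z_n \in F$ be pairwise distinct. Then $\sum_{\gamma \in (1,\dots,i) \,\shuffle\, (i+1,\dots,n-1)} \mathrm{PT}(\gamma_1,\dots,\gamma_{n-1},n) = 0$, where the sum runs over all shuffles $\gamma$ of the ordered lists $(1,\dots,i)$ and $(i+1,\dots,n-1)$. (This is the shuffle identity for $k=2$ Parke-Taylor factors, the dual form of the degenerated Kleiss-Kuijf relation.) -/

import Mathlib

open List Finset

/-- The Parke-Taylor factor of a list of labels `l`, with points `z`: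
`∏ m, (z l_m - z l_{m+1})⁻¹`, indices read cyclically. -/
noncomputable def PTl {F : Type*} [Field F] (z : ℕ → F) (l : List ℕ) : F :=
  ∏ m : Fin l.length, (z (l.get m) - z (l.get (finRotate l.length m)))⁻¹

section

variable {F : Type*} [Field F]

/-- Open chain product `∏ (z aᵢ - z aᵢ₊₁)⁻¹` over consecutive pairs. -/
noncomputable def ch (z : ℕ → F) : List ℕ → F
  | [] => 1
  | [_] => 1
  | a :: c :: l => (z a - z c)⁻¹ * ch z (c :: l)

@[simp] lemma ch_nil (z : ℕ → F) : ch z [] = 1 := rfl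
@[simp] lemma ch_single (z : ℕ → F) (a : ℕ) : ch z [a] = 1 := rfl
@[simp] lemma ch_cons_cons (z : ℕ → F) (a c : ℕ) (l : List ℕ) :
    ch z (a :: c :: l) = (z a - z c)⁻¹ * ch z (c :: l) := rfl

lemma ch_prod (z : ℕ → F) : ∀ (xs : List ℕ) (x : ℕ),
    ch z (x :: xs)
      = ∏ m : Fin xs.length, (z ((x :: xs).get m.castSucc) - z ((x :: xs).get m.succ))⁻¹
  | [], x => by simp
  | y :: ys, x => by
    rw [ch_cons_cons, ch_prod z ys y]
    show _ = ∏ m : Fin (ys.length + 1),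
      (z ((x :: y :: ys).get m.castSucc) - z ((x :: y :: ys).get m.succ))⁻¹
    rw [Fin.prod_univ_succ]
    congr 1

lemma PTl_cons (z : ℕ → F) (x : ℕ) (xs : List ℕ) :
    PTl z (x :: xs) = ch z (x :: xs) * (z ((x :: xs).getLast (by simp)) - z x)⁻¹ := by
  rw [ch_prod]
  show (∏ m : Fin (xs.length + 1),
      (z ((x :: xs).get m) - z ((x :: xs).get (finRotate (xs.length + 1) m)))⁻¹) = _
  rw [Fin.prod_univ_castSucc]
  congr 1
  · apply Finset.prod_congr rfl
    intro m _
    rw [finRotate_succ_apply, Fin.coeSucc_eq_succ]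
  · rw [finRotate_last]
    congr 2
    simp [List.getLast_eq_getElem, List.get_eq_getElem]

lemma PTl_eq_ch (z : ℕ → F) (N : ℕ) (γ : List ℕ) (hγ : γ ≠ []) :
    PTl z (γ ++ [N]) = ch z (N :: γ ++ [N]) := by
  obtain ⟨g, γ', rfl⟩ := List.exists_cons_of_ne_nil hγ
  simp only [cons_append]
  rw [PTl_cons, ch_cons_cons]
  have hlast : ((g :: (γ' ++ [N])).getLast (by simp)) = N := by
    simp [List.getLast_append]
  rw [hlast]
  ring

lemma ch_insert_gen (z : ℕ → F) (u : List ℕ) (x b y : ℕ) (v : List ℕ)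
    (h1 : z x ≠ z b) (h2 : z b ≠ z y) (h3 : z x ≠ z y) :
    ch z (u ++ x :: b :: y :: v)
      = ch z (u ++ x :: y :: v) * ((z b - z y)⁻¹ - (z b - z x)⁻¹) := by
  induction u with
  | nil =>
    simp only [nil_append, ch_cons_cons]
    have k1 : z x - z b ≠ 0 := sub_ne_zero.mpr h1
    have k2 : z b - z y ≠ 0 := sub_ne_zero.mpr h2
    have k3 : z x - z y ≠ 0 := sub_ne_zero.mpr h3
    have key : (z x - z b)⁻¹ * (z b - z y)⁻¹
        = (z x - z y)⁻¹ * ((z b - z y)⁻¹ - (z b - z x)⁻¹) := by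
      have k4 : z b - z x ≠ 0 := sub_ne_zero.mpr (Ne.symm h1)
      field_simp
      ring
    calc (z x - z b)⁻¹ * ((z b - z y)⁻¹ * ch z (y :: v))
        = ((z x - z b)⁻¹ * (z b - z y)⁻¹) * ch z (y :: v) := by ring
      _ = ((z x - z y)⁻¹ * ((z b - z y)⁻¹ - (z b - z x)⁻¹)) * ch z (y :: v) := by rw [key]
      _ = (z x - z y)⁻¹ * ch z (y :: v) * ((z b - z y)⁻¹ - (z b - z x)⁻¹) := by ring
  | cons a u ih =>
    cases u with
    | nil =>
      simp only [nil_append, cons_append, ch_cons_cons] at ih ⊢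
      rw [ih]
      ring
    | cons a' u' =>
      simp only [cons_append, ch_cons_cons] at ih ⊢
      rw [ih]
      ring

lemma insertIdx_eq : ∀ (k : ℕ) (l : List ℕ), k ≤ l.length → ∀ (b : ℕ),
    insertIdx l k b = take k l ++ b :: drop k l
  | 0, l, _, b => by simp
  | k + 1, [], h, b => by simp at h
  | k + 1, c :: l, h, b => by
    simp only [insertIdx_succ_cons, take_succ_cons, drop_succ_cons, cons_append]
    rw [insertIdx_eq k l (Nat.le_of_succ_le_succ h) b]

lemma step_lemma (z : ℕ → F) (N b : ℕ) (τ : List ℕ) (k : ℕ) (hk : k ≤ τ.length)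
    (h1 : z ((N :: τ ++ [N]).getD k 0) ≠ z b)
    (h2 : z b ≠ z ((N :: τ ++ [N]).getD (k + 1) 0))
    (h3 : z ((N :: τ ++ [N]).getD k 0) ≠ z ((N :: τ ++ [N]).getD (k + 1) 0)) :
    ch z (N :: insertIdx τ k b ++ [N])
      = ch z (N :: τ ++ [N])
        * ((z b - z ((N :: τ ++ [N]).getD (k + 1) 0))⁻¹
            - (z b - z ((N :: τ ++ [N]).getD k 0))⁻¹) := by
  simp only [cons_append] at h1 h2 h3 ⊢
  set w : List ℕ := N :: (τ ++ [N]) with hw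
  have hwlen : w.length = τ.length + 2 := by simp [hw]
  have hk1 : k < w.length := by omega
  have hk2 : k + 1 < w.length := by omega
  rw [List.getD_eq_getElem w 0 hk1] at h1 h3
  rw [List.getD_eq_getElem w 0 hk2] at h2 h3
  rw [List.getD_eq_getElem w 0 hk1, List.getD_eq_getElem w 0 hk2]
  have hdecomp : w = take k w ++ w[k] :: w[k + 1] :: drop (k + 2) w := by
    conv_lhs => rw [← take_append_drop k w]
    rw [drop_eq_getElem_cons hk1, drop_eq_getElem_cons hk2]
  have hins : (N :: (insertIdx τ k b ++ [N]))
      = take k w ++ w[k] :: b :: w[k + 1] :: drop (k + 2) w := by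
    have e1 : N :: (insertIdx τ k b ++ [N]) = insertIdx w (k + 1) b := by
      rw [hw, insertIdx_succ_cons]
      congr 1
      rw [insertIdx_eq k (τ ++ [N]) (by simp; omega) b, insertIdx_eq k τ hk b,
        take_append_of_le_length hk, drop_append_of_le_length hk]
      simp
    have e2 : take (k + 1) w = take k w ++ [w[k]] := by
      rw [take_succ, getElem?_eq_getElem hk1]
      rfl
    rw [e1, insertIdx_eq (k + 1) w (by omega) b, e2]
    simp only [append_assoc, singleton_append, cons_append]
    rw [drop_eq_getElem_cons hk2]
    simp
  rw [hins, ch_insert_gen z (take k w) w[k] b w[k+1] (drop (k+2) w) h1 h2 h3, ← hdecomp]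

lemma PT_inner_sum (z : ℕ → F) (N b : ℕ) (τ : List ℕ) (hτ : τ ≠ [])
    (hnd : (τ ++ [N]).Nodup) (hb : b ∉ τ ++ [N])
    (hzz : ∀ a ∈ b :: N :: τ, ∀ c ∈ b :: N :: τ, z a = z c → a = c)
    (s : ℕ) (hs : s ≤ τ.length) :
    ∑ k ∈ Finset.Icc s τ.length, ch z (N :: insertIdx τ k b ++ [N])
      = ch z (N :: τ ++ [N])
        * ((z b - z N)⁻¹ - (z b - z ((N :: τ).getD s 0))⁻¹) := by
  have hτnd : τ.Nodup := (nodup_append.mp hnd).1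
  have hNτ : N ∉ τ := by
    have := (nodup_append.mp hnd).2.2
    intro hmem
    exact this N hmem N (by simp) rfl
  have hbτ : b ∉ τ := fun h => hb (mem_append.mpr (Or.inl h))
  have hbN : b ≠ N := by
    intro h; exact hb (mem_append.mpr (Or.inr (by simp [h])))
  have hndNτ : (N :: τ).Nodup := nodup_cons.mpr ⟨hNτ, hτnd⟩
  have hτlen : 1 ≤ τ.length := by
    cases τ with
    | nil => exact absurd rfl hτ
    | cons _ _ => simp
  set w : List ℕ := (N :: τ) ++ [N] with hw
  have hwlen : w.length = τ.length + 2 := by simp [hw]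
  have hgetc : ∀ j, j ≤ τ.length → ∀ (hj : j < (N :: τ).length),
      w.getD j 0 = (N :: τ)[j] := by
    intro j hj hj2
    rw [List.getD_eq_getElem w 0 (by omega)]
    exact List.getElem_append_left (bs := [N]) hj2
  have hlast : w.getD (τ.length + 1) 0 = N := by
    rw [List.getD_eq_getElem w 0 (by omega)]
    show ((N :: τ) ++ [N])[τ.length + 1]'(by simp) = N
    rw [List.getElem_append_right (by simp)]
    simp
  have hdist : ∀ k, k ≤ τ.length →
      w.getD k 0 ≠ w.getD (k + 1) 0 ∧ w.getD k 0 ∈ N :: τ ∧ w.getD (k + 1) 0 ∈ N :: τ := by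
    intro k hk
    have hklt : k < (N :: τ).length := by simp; omega
    have e1 := hgetc k hk hklt
    by_cases hkp : k = τ.length
    · have e2 : w.getD (k + 1) 0 = (N :: τ)[0]'(by simp) := by
        rw [hkp, hlast]; rfl
      refine ⟨?_, ?_, ?_⟩
      · rw [e1, e2]
        intro h
        have := (hndNτ.getElem_inj_iff).mp h
        omega
      · rw [e1]; exact List.getElem_mem _
      · rw [e2]; exact List.getElem_mem _
    · have hk1 : k + 1 < (N :: τ).length := by simp; omega
      have e2 := hgetc (k + 1) (by omega) hk1
      refine ⟨?_, ?_, ?_⟩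
      · rw [e1, e2]
        intro h
        have := (hndNτ.getElem_inj_iff).mp h
        omega
      · rw [e1]; exact List.getElem_mem _
      · rw [e2]; exact List.getElem_mem _
  have hbmem : ∀ x, x ∈ N :: τ → x ≠ b := by
    intro x hx hxb
    subst hxb
    rcases List.mem_cons.mp hx with h | h
    · exact hbN h
    · exact hbτ h
  have key : ∀ k ∈ Finset.Icc s τ.length,
      ch z (N :: insertIdx τ k b ++ [N])
        = ch z (N :: τ ++ [N])
          * ((z b - z (w.getD (k + 1) 0))⁻¹ - (z b - z (w.getD k 0))⁻¹) := by
    intro k hk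
    rw [Finset.mem_Icc] at hk
    obtain ⟨hne, hm1, hm2⟩ := hdist k hk.2
    have m1 : w.getD k 0 ∈ b :: N :: τ := List.mem_cons_of_mem _ hm1
    have m2 : w.getD (k + 1) 0 ∈ b :: N :: τ := List.mem_cons_of_mem _ hm2
    have mb : b ∈ b :: N :: τ := List.mem_cons_self
    refine step_lemma z N b τ k hk.2 ?_ ?_ ?_
    · intro h
      exact hbmem _ hm1 (hzz _ m1 _ mb h)
    · intro h
      exact hbmem _ hm2 (hzz _ m2 _ mb h.symm)
    · intro h
      exact hne (hzz _ m1 _ m2 h)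
  rw [Finset.sum_congr rfl key, ← Finset.mul_sum]
  congr 1
  have hIcc : Finset.Icc s τ.length = Finset.Ico s (τ.length + 1) := by
    rw [Finset.Ico_add_one_right_eq_Icc]
  rw [hIcc, Finset.sum_Ico_eq_sub _ (by omega),
    Finset.sum_range_sub (fun j => (z b - z (w.getD j 0))⁻¹),
    Finset.sum_range_sub (fun j => (z b - z (w.getD j 0))⁻¹), hlast]
  have hslt : s < (N :: τ).length := by simp; omega
  rw [hgetc s hs hslt, List.getD_eq_getElem (N :: τ) 0 hslt]
  ring

lemma sublist_take_indexOf : ∀ {L : List ℕ}, L.Nodup → ∀ {u : List ℕ} {x : ℕ},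
    u ++ [x] <+ L → u <+ L.take (idxOf x L)
  | [], _, u, x, h => by
    have := List.eq_nil_of_sublist_nil h
    simp at this
  | c :: L', hL, u, x, h => by
    have hcL : c ∉ L' := (nodup_cons.mp hL).1
    have hL' : L'.Nodup := (nodup_cons.mp hL).2
    rcases List.sublist_cons_iff.mp h with h' | ⟨r, hr, hrs⟩
    · have hx : x ∈ L' := h'.subset (by simp)
      have hxc : c ≠ x := fun e => hcL (e ▸ hx)
      rw [List.idxOf_cons_ne _ hxc, List.take_succ_cons]
      exact (sublist_take_indexOf hL' h').cons c
    · cases u with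
      | nil => exact nil_sublist _
      | cons a u' =>
        have ha : a = c := by injection hr
        have hr2 : u' ++ [x] = r := by injection hr
        have hrs' : u' ++ [x] <+ L' := hr2 ▸ hrs
        have hx : x ∈ L' := hrs'.subset (by simp)
        have hxc : c ≠ x := fun e => hcL (e ▸ hx)
        rw [List.idxOf_cons_ne _ hxc, List.take_succ_cons, ha]
        exact List.cons_sublist_cons.mpr (sublist_take_indexOf hL' hrs')

lemma insertIdx_eraseIdx_self : ∀ (γ : List ℕ) (k : ℕ) (hk : k < γ.length),
    insertIdx (γ.eraseIdx k) k (γ[k]'hk) = γ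
  | c :: γ', 0, _ => by simp
  | c :: γ', k + 1, hk => by
    have := insertIdx_eraseIdx_self γ' k (by simpa using hk)
    simpa using this

lemma erase_eq_eraseIdx_indexOf : ∀ (γ : List ℕ) (b : ℕ), b ∈ γ →
    γ.erase b = γ.eraseIdx (idxOf b γ)
  | c :: γ', b, hmem => by
    by_cases hcb : c = b
    · subst hcb
      simp [List.erase_cons_head, List.idxOf_cons_self]
    · have hbγ' : b ∈ γ' := by
        rcases List.mem_cons.mp hmem with h | h
        · exact absurd h.symm hcb
        · exact h
      rw [List.erase_cons_tail (by simpa using hcb),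
        List.idxOf_cons_ne _ hcb, erase_eq_eraseIdx_indexOf γ' b hbγ']
      rfl

lemma erase_insertIdx (τ : List ℕ) (b : ℕ) (k : ℕ) (hb : b ∉ τ) (hk : k ≤ τ.length) :
    (insertIdx τ k b).erase b = τ := by
  rw [insertIdx_eq k τ hk b,
    List.erase_append_right _ (fun h => hb ((take_sublist k τ).subset h)),
    List.erase_cons_head]
  exact take_append_drop k τ

lemma indexOf_insertIdx (τ : List ℕ) (b : ℕ) (k : ℕ) (hb : b ∉ τ) (hk : k ≤ τ.length) :
    idxOf b (insertIdx τ k b) = k := by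
  rw [insertIdx_eq k τ hk b,
    List.idxOf_append_of_notMem (fun h => hb ((take_sublist k τ).subset h)),
    List.idxOf_cons_self]
  simp [List.length_take]
  omega

/-- The set of shuffles of `α` and `β` (for disjoint duplicate-free lists). -/
def Shuf (α β : List ℕ) : Finset (List ℕ) :=
  (α ++ β).permutations.toFinset.filter (fun γ => α.Sublist γ ∧ β.Sublist γ)

lemma mem_Shuf {α β γ : List ℕ} : γ ∈ Shuf α β ↔ γ ~ α ++ β ∧ α <+ γ ∧ β <+ γ := by
  simp only [Shuf, Finset.mem_filter, List.mem_toFinset, List.mem_permutations]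

/-- Starting position for inserting the new last element of the second list. -/
def sfun (β' τ : List ℕ) : ℕ :=
  if h : β' = [] then 0 else idxOf (β'.getLast h) τ + 1

lemma shuf_decomp (α β' : List ℕ) (b : ℕ) (hnd : (α ++ (β' ++ [b])).Nodup) :
    Shuf α (β' ++ [b])
      = (Shuf α β').biUnion (fun τ =>
          (Finset.Icc (sfun β' τ) τ.length).image (fun k => insertIdx τ k b)) := by
  have hnd2 : ((α ++ β') ++ [b]).Nodup := by rwa [append_assoc]
  have hnd' : (α ++ β').Nodup := (nodup_append.mp hnd2).1
  have hbαβ : b ∉ α ++ β' := by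
    intro hmem
    exact (nodup_append.mp hnd2).2.2 b hmem b (by simp) rfl
  have hbα : b ∉ α := fun h => hbαβ (mem_append.mpr (Or.inl h))
  have hbβ' : b ∉ β' := fun h => hbαβ (mem_append.mpr (Or.inr h))
  ext γ
  simp only [Finset.mem_biUnion, Finset.mem_image, Finset.mem_Icc, mem_Shuf]
  constructor
  · rintro ⟨hperm, hα, hβ⟩
    have hγnd : γ.Nodup := hperm.nodup_iff.mpr hnd
    have hbγ : b ∈ γ := hperm.mem_iff.mpr (by simp)
    have hklt : idxOf b γ < γ.length := idxOf_lt_length_iff.mpr hbγ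
    refine ⟨γ.erase b, ⟨?_, ?_, ?_⟩, idxOf b γ, ⟨?_, ?_⟩, ?_⟩
    · have he : (α ++ (β' ++ [b])).erase b = α ++ β' := by
        rw [List.erase_append_right _ hbα, List.erase_append_right _ hbβ']
        simp
      exact he ▸ hperm.erase b
    · have := hα.erase b
      rwa [List.erase_of_not_mem hbα] at this
    · have := hβ.erase b
      rwa [List.erase_append_right _ hbβ', List.erase_cons_head, append_nil] at this
    · unfold sfun
      split_ifs with hβ'e
      · exact Nat.zero_le _
      · set x := β'.getLast hβ'e with hx
        set u := β'.dropLast with hu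
        have hd : u ++ [x] = β' := List.dropLast_append_getLast hβ'e
        have hP : u ++ [x] <+ take (idxOf b γ) γ := by
          have h2 : (u ++ [x]) ++ [b] <+ γ := by rw [hd]; exact hβ
          exact sublist_take_indexOf hγnd h2
        have hxmem : x ∈ take (idxOf b γ) γ := hP.subset (by simp)
        have herase : γ.erase b = take (idxOf b γ) γ ++ drop (idxOf b γ + 1) γ := by
          rw [erase_eq_eraseIdx_indexOf γ b hbγ, eraseIdx_eq_take_drop_succ]
        rw [herase, List.idxOf_append_of_mem hxmem]
        have := idxOf_lt_length_iff.mpr hxmem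
        have hlen : (take (idxOf b γ) γ).length = idxOf b γ := by
          rw [List.length_take]; omega
        omega
    · have : (γ.erase b).length = γ.length - 1 := by
        rw [List.length_erase]
        simp [hbγ]
      omega
    · have he : γ.erase b = γ.eraseIdx (idxOf b γ) := erase_eq_eraseIdx_indexOf γ b hbγ
      have hg : γ[idxOf b γ]'hklt = b := List.getElem_idxOf hklt
      rw [he]
      calc insertIdx (γ.eraseIdx (idxOf b γ)) (idxOf b γ) b
          = insertIdx (γ.eraseIdx (idxOf b γ)) (idxOf b γ) (γ[idxOf b γ]'hklt) := by
            rw [hg]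
        _ = γ := insertIdx_eraseIdx_self γ (idxOf b γ) hklt
  · rintro ⟨τ, ⟨hperm, hα, hβ'sub⟩, k, ⟨hsk, hk⟩, rfl⟩
    have hτnd : τ.Nodup := hperm.nodup_iff.mpr hnd'
    have hbτ : b ∉ τ := fun h => hbαβ (hperm.mem_iff.mp h)
    have hτsub : τ <+ insertIdx τ k b := by
      rw [insertIdx_eq k τ hk b]
      conv_lhs => rw [← take_append_drop k τ]
      exact (Sublist.refl _).append (sublist_cons_self b _)
    refine ⟨?_, hα.trans hτsub, ?_⟩
    · have h1 : insertIdx τ k b ~ b :: τ := perm_insertIdx b τ hk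
      have h2 : b :: τ ~ b :: (α ++ β') := hperm.cons b
      have h3 : b :: (α ++ β') ~ (α ++ β') ++ [b] := (perm_append_singleton _ _).symm
      have := h1.trans (h2.trans h3)
      rwa [append_assoc] at this
    · by_cases hβ'e : β' = []
      · subst hβ'e
        simp only [nil_append, singleton_sublist]
        rw [insertIdx_eq k τ hk b]
        simp
      · set x := β'.getLast hβ'e with hx
        set u := β'.dropLast with hu
        have hd : u ++ [x] = β' := List.dropLast_append_getLast hβ'e
        rw [sfun, dif_neg hβ'e, ← hx] at hsk
        have hβ'sub2 : u ++ [x] <+ τ := hd ▸ hβ'sub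
        have hxτ : x ∈ τ := hβ'sub2.subset (by simp)
        have hmlt : idxOf x τ < τ.length := idxOf_lt_length_iff.mpr hxτ
        have hup : u <+ take (idxOf x τ) τ := sublist_take_indexOf hτnd hβ'sub2
        have hgx : τ[idxOf x τ]'hmlt = x := List.getElem_idxOf hmlt
        have h1 : u ++ [x] <+ take (idxOf x τ + 1) τ := by
          rw [take_succ, getElem?_eq_getElem hmlt, hgx]
          exact hup.append (Sublist.refl [x])
        have h2 : take (idxOf x τ + 1) τ <+ take k τ := by
          have he : take (idxOf x τ + 1) τ = take (idxOf x τ + 1) (take k τ) := by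
            rw [take_take]
            congr 1
            omega
          rw [he]
          exact take_sublist _ _
        rw [insertIdx_eq k τ hk b, ← hd]
        exact ((h1.trans h2).append (List.cons_sublist_cons.mpr (nil_sublist _)))

lemma sum_shuf (α β' : List ℕ) (b : ℕ) (hnd : (α ++ (β' ++ [b])).Nodup)
    (f : List ℕ → F) :
    ∑ γ ∈ Shuf α (β' ++ [b]), f γ
      = ∑ τ ∈ Shuf α β', ∑ k ∈ Finset.Icc (sfun β' τ) τ.length, f (insertIdx τ k b) := by
  have hnd2 : ((α ++ β') ++ [b]).Nodup := by rwa [append_assoc]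
  have hnd' : (α ++ β').Nodup := (nodup_append.mp hnd2).1
  have hbαβ : b ∉ α ++ β' := by
    intro hmem
    exact (nodup_append.mp hnd2).2.2 b hmem b (by simp) rfl
  have hbτ : ∀ τ ∈ Shuf α β', b ∉ τ := by
    intro τ hτ h
    exact hbαβ ((mem_Shuf.mp hτ).1.mem_iff.mp h)
  rw [shuf_decomp α β' b hnd]
  rw [Finset.sum_biUnion ?_]
  · refine Finset.sum_congr rfl fun τ hτ => ?_
    rw [Finset.sum_image ?_]
    intro k1 hk1 k2 hk2 he
    rw [Finset.mem_coe, Finset.mem_Icc] at hk1 hk2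
    have e1 : idxOf b (insertIdx τ k1 b) = k1 := indexOf_insertIdx τ b k1 (hbτ τ hτ) hk1.2
    have e2 : idxOf b (insertIdx τ k2 b) = k2 := indexOf_insertIdx τ b k2 (hbτ τ hτ) hk2.2
    rw [← e1, ← e2, show insertIdx τ k1 b = insertIdx τ k2 b from he]
  · intro τ1 h1 τ2 h2 hne
    rw [Finset.mem_coe] at h1 h2
    refine Finset.disjoint_left.mpr ?_
    rintro γ hm1 hm2
    simp only [Finset.mem_image, Finset.mem_Icc] at hm1 hm2
    obtain ⟨k1, ⟨_, hk1⟩, he1⟩ := hm1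
    obtain ⟨k2, ⟨_, hk2⟩, he2⟩ := hm2
    apply hne
    have := erase_insertIdx τ1 b k1 (hbτ τ1 h1) hk1
    have h22 := erase_insertIdx τ2 b k2 (hbτ τ2 h2) hk2
    rw [← this, he1, ← he2, h22]

lemma master (z : ℕ → F) (N : ℕ) (β : List ℕ) :
    ∀ (α : List ℕ), α ≠ [] → β ≠ [] →
    ((α ++ β) ++ [N]).Nodup →
    (∀ a ∈ (α ++ β) ++ [N], ∀ c ∈ (α ++ β) ++ [N], z a = z c → a = c) →
    ∑ γ ∈ Shuf α β, PTl z (γ ++ [N]) = 0 := by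
  induction β using List.reverseRecOn with
  | nil => intro α _ hβ _ _; exact absurd rfl hβ
  | append_singleton β' b ih =>
    intro α hα _ hnd hz
    have hnd1 : (α ++ (β' ++ [b])).Nodup := (nodup_append.mp hnd).1
    have hNout : N ∉ α ++ (β' ++ [b]) := fun h => (nodup_append.mp hnd).2.2 N h N (by simp) rfl
    have hnd2 : ((α ++ β') ++ [b]).Nodup := by rwa [append_assoc]
    have hndαβ' : (α ++ β').Nodup := (nodup_append.mp hnd2).1
    have hbαβ : b ∉ α ++ β' := fun hmem => (nodup_append.mp hnd2).2.2 b hmem b (by simp) rfl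
    have hbN : b ≠ N := by
      intro h
      exact hNout (by simp [← h])
    have hsub : (α ++ β') ++ [N] <+ (α ++ (β' ++ [b])) ++ [N] := by
      refine Sublist.append ?_ (Sublist.refl [N])
      exact (Sublist.refl α).append (List.sublist_append_left β' [b])
    rw [sum_shuf α β' b hnd1 (fun γ => PTl z (γ ++ [N]))]
    have hstep : ∀ τ ∈ Shuf α β',
        ∑ k ∈ Finset.Icc (sfun β' τ) τ.length, PTl z (insertIdx τ k b ++ [N])
          = PTl z (τ ++ [N])
            * ((z b - z N)⁻¹ - (z b - z ((N :: τ).getD (sfun β' τ) 0))⁻¹) := by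
      intro τ hτ
      obtain ⟨hperm, hαsub, hβ'sub⟩ := mem_Shuf.mp hτ
      have hτne : τ ≠ [] := by
        intro h
        rw [h] at hαsub
        exact hα (List.eq_nil_of_sublist_nil hαsub)
      have hτnodup : τ.Nodup := hperm.nodup_iff.mpr hndαβ'
      have hNτ : N ∉ τ := by
        intro h
        apply hNout
        have h2 := hperm.mem_iff.mp h
        simp only [mem_append] at h2 ⊢
        tauto
      have hbτN : b ∉ τ ++ [N] := by
        intro h
        rcases mem_append.mp h with h | h
        · exact hbαβ (hperm.mem_iff.mp h)
        · simp at h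
          exact hbN h
      have hndτN : (τ ++ [N]).Nodup := by
        rw [nodup_append]
        refine ⟨hτnodup, by simp, ?_⟩
        intro x hx y hxN hxy
        simp at hxN
        subst hxN
        subst hxy
        exact hNτ hx
      have hzz : ∀ a ∈ b :: N :: τ, ∀ c ∈ b :: N :: τ, z a = z c → a = c := by
        have hmem : ∀ x, x ∈ b :: N :: τ → x ∈ (α ++ (β' ++ [b])) ++ [N] := by
          intro x hx
          rcases List.mem_cons.mp hx with rfl | hx
          · simp
          rcases List.mem_cons.mp hx with rfl | hx
          · simp
          · have := hperm.mem_iff.mp hx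
            simp only [mem_append] at this ⊢
            tauto
        intro a ha c hc
        exact hz a (hmem a ha) c (hmem c hc)
      have hs : sfun β' τ ≤ τ.length := by
        unfold sfun
        split_ifs with h
        · exact Nat.zero_le _
        · have hxτ : β'.getLast h ∈ τ := hβ'sub.subset (List.getLast_mem h)
          have := idxOf_lt_length_iff.mpr hxτ
          omega
      have conv1 : ∀ k ∈ Finset.Icc (sfun β' τ) τ.length,
          PTl z (insertIdx τ k b ++ [N]) = ch z (N :: insertIdx τ k b ++ [N]) := by
        intro k hk
        rw [Finset.mem_Icc] at hk
        apply PTl_eq_ch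
        intro h
        have hlen := congrArg List.length h
        rw [length_insertIdx, if_pos hk.2] at hlen
        simp at hlen
      rw [Finset.sum_congr rfl conv1,
        PT_inner_sum z N b τ hτne hndτN hbτN hzz (sfun β' τ) hs,
        PTl_eq_ch z N τ hτne]
    rw [Finset.sum_congr rfl hstep]
    by_cases hβ'e : β' = []
    · subst hβ'e
      apply Finset.sum_eq_zero
      intro τ hτ
      simp [sfun]
    · have hconst : ∀ τ ∈ Shuf α β',
          (N :: τ).getD (sfun β' τ) 0 = β'.getLast hβ'e := by
        intro τ hτ
        obtain ⟨hperm, hαsub, hβ'sub⟩ := mem_Shuf.mp hτ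
        have hxτ : β'.getLast hβ'e ∈ τ := hβ'sub.subset (List.getLast_mem hβ'e)
        have hmlt : idxOf (β'.getLast hβ'e) τ < τ.length := idxOf_lt_length_iff.mpr hxτ
        rw [sfun, dif_neg hβ'e, List.getD_cons_succ,
          List.getD_eq_getElem τ 0 hmlt, List.getElem_idxOf hmlt]
      calc ∑ τ ∈ Shuf α β', PTl z (τ ++ [N])
              * ((z b - z N)⁻¹ - (z b - z ((N :: τ).getD (sfun β' τ) 0))⁻¹)
          = ∑ τ ∈ Shuf α β', PTl z (τ ++ [N])
              * ((z b - z N)⁻¹ - (z b - z (β'.getLast hβ'e))⁻¹) := by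
            refine Finset.sum_congr rfl fun τ hτ => ?_
            rw [hconst τ hτ]
        _ = (∑ τ ∈ Shuf α β', PTl z (τ ++ [N]))
              * ((z b - z N)⁻¹ - (z b - z (β'.getLast hβ'e))⁻¹) := by
            rw [Finset.sum_mul]
        _ = 0 := by
            rw [ih α hα hβ'e (hnd.sublist hsub)
              (fun a ha c hc => hz a (hsub.subset ha) c (hsub.subset hc))]
            ring

end

/-- The shuffle identity for `k = 2` Parke-Taylor factors: the sum over all shuffles `γ`
of the ordered lists `(1, …, i)` and `(i+1, …, n-1)` of `PT(γ, n)` vanishes.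
Shuffles of the two (disjoint, duplicate-free) lists are exactly the permutations of their
concatenation containing each of them as a sublist. -/
theorem stmt1 {F : Type*} [Field F] (n i : ℕ) (hn : 3 ≤ n) (hi1 : 1 ≤ i) (hi2 : i ≤ n - 2)
    (z : ℕ → F)
    (hz : ∀ a ∈ Finset.Icc 1 n, ∀ b ∈ Finset.Icc 1 n, z a = z b → a = b) :
    ∑ γ ∈ (List.range' 1 i ++ List.range' (i + 1) (n - 1 - i)).permutations.toFinset.filter
        (fun γ => List.Sublist (List.range' 1 i) γ ∧ List.Sublist (List.range' (i + 1) (n - 1 - i)) γ),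
      PTl z (γ ++ [n]) = 0 := by
  have hαne : List.range' 1 i ≠ [] := by
    intro h
    have := congrArg List.length h
    simp at this
    omega
  have hβne : List.range' (i + 1) (n - 1 - i) ≠ [] := by
    intro h
    have := congrArg List.length h
    simp at this
    omega
  have hcat : List.range' 1 i ++ List.range' (i + 1) (n - 1 - i) = List.range' 1 (n - 1) := by
    have h : List.range' 1 i 1 ++ List.range' (1 + 1 * i) (n - 1 - i) 1
        = List.range' 1 (i + (n - 1 - i)) 1 := List.range'_append
    rw [(by omega : 1 + 1 * i = i + 1), (by omega : i + (n - 1 - i) = n - 1)] at h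
    exact h
  have hcat2 : (List.range' 1 i ++ List.range' (i + 1) (n - 1 - i)) ++ [n]
      = List.range' 1 n := by
    rw [hcat]
    have h : List.range' 1 (n - 1) 1 ++ List.range' (1 + 1 * (n - 1)) 1 1
        = List.range' 1 (n - 1 + 1) 1 := List.range'_append
    rw [(by omega : 1 + 1 * (n - 1) = n), (by omega : n - 1 + 1 = n)] at h
    simpa using h
  have hnd : ((List.range' 1 i ++ List.range' (i + 1) (n - 1 - i)) ++ [n]).Nodup := by
    rw [hcat2]
    exact List.nodup_range' (h := by norm_num)
  have hz' : ∀ a ∈ (List.range' 1 i ++ List.range' (i + 1) (n - 1 - i)) ++ [n],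
      ∀ c ∈ (List.range' 1 i ++ List.range' (i + 1) (n - 1 - i)) ++ [n],
      z a = z c → a = c := by
    intro a ha c hc
    rw [hcat2, List.mem_range'_1] at ha hc
    exact hz a (Finset.mem_Icc.mpr ⟨ha.1, by omega⟩) c (Finset.mem_Icc.mpr ⟨hc.1, by omega⟩)
  exact master z n (List.range' (i + 1) (n - 1 - i)) (List.range' 1 i) hαne hβne hnd hz'
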